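/- Let R be a subring of a ring S, and assume that every semiprime factor ring of R and of S is left or right Goldie and that the prime radical of every factor ring of R and of S is nilpotent. If I is an ideal of R and J is an ideal of S such that V_R(J ∩ R) ⊆ V_R(I), then V_S(J) ⊆ V_S(I^S). -/
import Mathlib


/-- A two-sided ideal `P` of `A` is prime: it is proper, and for all two-sided ideals
`I, J`, `IJ ⊆ P` implies `I ⊆ P` or `J ⊆ P` (the product condition is expressed
elementwise on generators, which is equivalent since `P` is closed under addition). -/
def IsPrimeTwoSided {A : Type*} [Ring A] (P : TwoSidedIdeal A) : Prop :=
  P ≠ ⊤ ∧ ∀ I J : TwoSidedIdeal A, (∀ a ∈ I, ∀ b ∈ J, a * b ∈ P) → I ≤ P ∨ J ≤ P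

/-- `V_A(X)`: the Zariski-closed subset of `Spec A` determined by `X ⊆ A`. -/
def zarV {A : Type*} [Ring A] (X : Set A) : Set (TwoSidedIdeal A) :=
  {P | IsPrimeTwoSided P ∧ X ⊆ (P : Set A)}

/-- The prime radical of a subset `X ⊆ A`: the intersection of all prime (two-sided)
ideals containing `X`. -/
def primeRad {A : Type*} [Ring A] (X : Set A) : Set A :=
  {a | ∀ P : TwoSidedIdeal A, IsPrimeTwoSided P → X ⊆ (P : Set A) → a ∈ P}

/-- `Q` is a prime ideal of `A` minimal over the subset `X`. -/
def minimalOver {A : Type*} [Ring A] (X : Set A) (Q : TwoSidedIdeal A) : Prop :=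
  IsPrimeTwoSided Q ∧ X ⊆ (Q : Set A) ∧
    ∀ Q' : TwoSidedIdeal A, IsPrimeTwoSided Q' → X ⊆ (Q' : Set A) → Q' ≤ Q → Q' = Q

/-- The canonical correspondence `r : Spec S → Spec R` attached to `f : R →+* S`,
sending `P` to the set of primes of `R` minimal over `f⁻¹(P)`. -/
def rCorr {R S : Type*} [Ring R] [Ring S] (f : R →+* S) (P : TwoSidedIdeal S) :
    Set (TwoSidedIdeal R) :=
  {Q | minimalOver (f ⁻¹' (P : Set S)) Q}

/-- A (finite) family of submodules is independent: each member meets the supremum of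
the others trivially. -/
def FamIndep {R M : Type*} [Ring R] [AddCommGroup M] [Module R M] {k : ℕ}
    (g : Fin k → Submodule R M) : Prop :=
  ∀ i, g i ⊓ (⨆ j ∈ ({i}ᶜ : Set (Fin k)), g j) = ⊥

/-- The uniform (Goldie) dimension of the left `R`-module `M` is at most `n`: every
independent family of nonzero submodules has at most `n` members. -/
def UDimLE (R M : Type*) [Ring R] [AddCommGroup M] [Module R M] (n : ℕ) : Prop :=
  ∀ (k : ℕ) (g : Fin k → Submodule R M), (∀ i, g i ≠ ⊥) → FamIndep g → k ≤ n

/-- ACC on left annihilators (of subsets) in `A`. -/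
def ACCLeftAnn (A : Type*) [Ring A] : Prop :=
  ∀ c : ℕ → Set A, (∀ i, ∃ T : Set A, c i = {a | ∀ t ∈ T, a * t = 0}) →
    (∀ i, c i ⊆ c (i + 1)) → ∃ N, ∀ m, N ≤ m → c m = c N

/-- `A` is a left Goldie ring: finite uniform dimension as a left module over itself and
ACC on left annihilators. -/
def LeftGoldie (A : Type*) [Ring A] : Prop :=
  (∃ n, UDimLE A A n) ∧ ACCLeftAnn A

/-- `A` is a left or right Goldie ring (right Goldie = the opposite ring is left Goldie). -/
def LeftOrRightGoldie (A : Type*) [Ring A] : Prop :=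
  LeftGoldie A ∨ LeftGoldie Aᵐᵒᵖ

/-- The prime radical of the ring `A` (the intersection of all its prime ideals, i.e.
`primeRad ∅`) is nilpotent. -/
def NilpotentPrimeRad (A : Type*) [Ring A] : Prop :=
  ∃ n : ℕ, 0 < n ∧ ∀ l : List A, l.length = n →
    (∀ x ∈ l, x ∈ primeRad (∅ : Set A)) → l.prod = 0

/-- Every semiprime factor ring of `A` is left or right Goldie. -/
def SemiprimeFactorsGoldie (A : Type*) [Ring A] : Prop :=
  ∀ I : TwoSidedIdeal A, primeRad (I : Set A) = (I : Set A) →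
    LeftOrRightGoldie I.ringCon.Quotient

/-- The prime radical of every factor ring of `A` is nilpotent. -/
def FactorRadsNilpotent (A : Type*) [Ring A] : Prop :=
  ∀ I : TwoSidedIdeal A, NilpotentPrimeRad I.ringCon.Quotient

/-- `X ∩ R`: the subset of the subring `R` obtained by intersecting `X ⊆ S` with `R`. -/
def restrSet {S : Type*} [Ring S] (R : Subring S) (X : Set S) : Set R :=
  Subtype.val ⁻¹' X

/-- `X^S = ann_S(S/SX)` for `X` a subset of the subring `R` of `S`: the annihilator in
`S` of the left `S`-module `S/SX`, where `SX` is the left ideal of `S` generated by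
`X`. -/
def extSub {S : Type*} [Ring S] (R : Subring S) (X : Set R) : Set S :=
  {a : S | ∀ s : S, a * s ∈ Ideal.span (Subtype.val '' X)}

/-- `λ` is a left adjoint to `ρ` (subring version): for all closed `V = V_S(J)` and
`W = V_R(I)` (`J`, `I` semiprime), `λV ⊆ W ↔ V ⊆ ρW`, where `λ(V_S(J)) = V_R(J ∩ R)`
and `ρ(V_R(I)) = V_S(I^S)`. -/
def AdjSub {S : Type*} [Ring S] (R : Subring S) : Prop :=
  ∀ J : TwoSidedIdeal S, primeRad (J : Set S) = (J : Set S) →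
  ∀ I : TwoSidedIdeal R, primeRad (I : Set R) = (I : Set R) →
    (zarV (restrSet R (J : Set S)) ⊆ zarV (I : Set R) ↔
      zarV (J : Set S) ⊆ zarV (extSub R (I : Set R)))

section Statement8Aux

/-- If every `(n+1)`-fold product of elements of the two-sided ideal `E` lies in the
prime `P`, then `E ≤ P`. -/
lemma aux_le_of_prods_mem {A : Type*} [Ring A] {P E : TwoSidedIdeal A}
    (hP : IsPrimeTwoSided P) :
    ∀ n : ℕ, (∀ l : List A, l.length = n + 1 → (∀ x ∈ l, x ∈ E) → l.prod ∈ P) →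
      ∀ x ∈ E, x ∈ P := by
  intro n
  induction n with
  | zero =>
    intro hn x hx
    simpa using hn [x] rfl (by simpa using hx)
  | succ n ih =>
    intro hn x hx
    let Jx : TwoSidedIdeal A := TwoSidedIdeal.mk' {y | ∀ a ∈ E, a * y ∈ P}
      (fun a _ => by simpa using P.zero_mem)
      (fun {y z} hy hz a ha => by rw [mul_add]; exact P.add_mem (hy a ha) (hz a ha))
      (fun {y} hy a ha => by rw [mul_neg]; exact P.neg_mem (hy a ha))
      (fun {s y} hy a ha => by rw [← mul_assoc]; exact hy (a * s) (E.mul_mem_right a s ha))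
      (fun {y s} hy a ha => by rw [← mul_assoc]; exact P.mul_mem_right _ _ (hy a ha))
    have hmemJx : ∀ y, y ∈ Jx ↔ ∀ a ∈ E, a * y ∈ P := fun y =>
      TwoSidedIdeal.mem_mk' _ _ _ _ _ _ y
    rcases hP.2 E Jx (fun a ha b hb => (hmemJx b).mp hb a ha) with hE | hJ
    · exact hE hx
    · refine ih (fun l hl hm => hJ ((hmemJx l.prod).mpr fun a ha => ?_)) x hx
      have := hn (a :: l) (by simp [hl]) (by
        intro y hy
        rcases List.mem_cons.mp hy with rfl | hy
        · exact ha
        · exact hm y hy)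
      simpa using this

/-- Elements of the prime radical of `K` map into the prime radical of `0` in the
quotient ring `A / K`. -/
lemma aux_rad_quot {A : Type*} [Ring A] (K : TwoSidedIdeal A) {x : A}
    (hx : x ∈ primeRad (K : Set A)) :
    K.ringCon.mk' x ∈ primeRad (∅ : Set K.ringCon.Quotient) := by
  intro P' hP' _
  set π : A →+* K.ringCon.Quotient := K.ringCon.mk' with hπ
  have hsurj : Function.Surjective π := fun y => Quotient.inductionOn y (fun a => ⟨a, rfl⟩)
  let Q : TwoSidedIdeal A := TwoSidedIdeal.mk' (π ⁻¹' (P' : Set K.ringCon.Quotient))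
    (by show π 0 ∈ (P' : Set _); rw [map_zero]; exact P'.zero_mem)
    (fun {a b} ha hb => by
      show π (a + b) ∈ (P' : Set _); rw [map_add]; exact P'.add_mem ha hb)
    (fun {a} ha => by show π (-a) ∈ (P' : Set _); rw [map_neg]; exact P'.neg_mem ha)
    (fun {a b} hb => by
      show π (a * b) ∈ (P' : Set _); rw [map_mul]; exact P'.mul_mem_left _ _ hb)
    (fun {a b} ha => by
      show π (a * b) ∈ (P' : Set _); rw [map_mul]; exact P'.mul_mem_right _ _ ha)
  have hmemQ : ∀ a, a ∈ Q ↔ π a ∈ P' := fun a => TwoSidedIdeal.mem_mk' _ _ _ _ _ _ a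
  have hQprime : IsPrimeTwoSided Q := by
    constructor
    · intro hQtop
      have h1 : (1 : A) ∈ Q := hQtop ▸ TwoSidedIdeal.mem_top _
      have : (1 : K.ringCon.Quotient) ∈ P' := by
        have := (hmemQ 1).mp h1; rwa [map_one] at this
      exact hP'.1 (P'.eq_top this)
    · intro A' B' hAB
      have mkIm : ∀ N : TwoSidedIdeal A, ∃ N' : TwoSidedIdeal K.ringCon.Quotient,
          (N' : Set _) = π '' (N : Set A) := by
        intro N
        refine ⟨TwoSidedIdeal.mk' (π '' (N : Set A)) ⟨0, N.zero_mem, map_zero π⟩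
          ?_ ?_ ?_ ?_, TwoSidedIdeal.coe_mk' _ _ _ _ _ _⟩
        · rintro _ _ ⟨a, ha, rfl⟩ ⟨b, hb, rfl⟩
          exact ⟨a + b, N.add_mem ha hb, map_add π a b⟩
        · rintro _ ⟨a, ha, rfl⟩
          exact ⟨-a, N.neg_mem ha, map_neg π a⟩
        · rintro x _ ⟨a, ha, rfl⟩
          obtain ⟨t, rfl⟩ := hsurj x
          exact ⟨t * a, N.mul_mem_left t a ha, map_mul π t a⟩
        · rintro _ y ⟨a, ha, rfl⟩
          obtain ⟨t, rfl⟩ := hsurj y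
          exact ⟨a * t, N.mul_mem_right a t ha, map_mul π a t⟩
      obtain ⟨A'', hA''⟩ := mkIm A'
      obtain ⟨B'', hB''⟩ := mkIm B'
      have hcond : ∀ a ∈ A'', ∀ b ∈ B'', a * b ∈ P' := by
        intro a ha b hb
        have ha' : a ∈ (A'' : Set _) := ha
        have hb' : b ∈ (B'' : Set _) := hb
        rw [hA''] at ha'; rw [hB''] at hb'
        obtain ⟨a0, ha0, rfl⟩ := ha'
        obtain ⟨b0, hb0, rfl⟩ := hb'
        rw [← map_mul]
        exact (hmemQ _).mp (hAB a0 ha0 b0 hb0)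
      rcases hP'.2 A'' B'' hcond with hle | hle
      · refine Or.inl fun a ha => (hmemQ a).mpr ?_
        exact hle (show π a ∈ (A'' : Set _) by rw [hA'']; exact ⟨a, ha, rfl⟩)
      · refine Or.inr fun b hb => (hmemQ b).mpr ?_
        exact hle (show π b ∈ (B'' : Set _) by rw [hB'']; exact ⟨b, hb, rfl⟩)
  have hKQ : (K : Set A) ⊆ (Q : Set A) := by
    intro k hk
    have hk0 : K.ringCon k 0 := (K.mem_iff k).mp hk
    have : π k = π 0 := (RingCon.eq _).mpr hk0
    refine (hmemQ k).mpr ?_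
    rw [this, map_zero]
    exact P'.zero_mem
  exact (hmemQ x).mp (hx Q hQprime hKQ)

end Statement8Aux

/-- Let `R` be a subring of `S`, with the Goldie/nilpotence
hypotheses of (3.7). If `I` is an ideal of `R` and `J` an ideal of `S` with
`V_R(J ∩ R) ⊆ V_R(I)`, then `V_S(J) ⊆ V_S(I^S)`. -/
theorem statement_8 {S : Type*} [Ring S] (R : Subring S)
    (hRG : SemiprimeFactorsGoldie R) (hSG : SemiprimeFactorsGoldie S)
    (hRN : FactorRadsNilpotent R) (hSN : FactorRadsNilpotent S)
    (I : TwoSidedIdeal R) (J : TwoSidedIdeal S)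
    (h : zarV (restrSet R (J : Set S)) ⊆ zarV (I : Set R)) :
    zarV (J : Set S) ⊆ zarV (extSub R (I : Set R)) := by
  intro P hP
  obtain ⟨hPp, hJP⟩ := hP
  refine ⟨hPp, ?_⟩
  -- `K = P ∩ R`, a two-sided ideal of `R`.
  let K : TwoSidedIdeal R := TwoSidedIdeal.mk' (Subtype.val ⁻¹' (P : Set S))
    (by show ((0 : R) : S) ∈ (P : Set S); rw [ZeroMemClass.coe_zero]; exact P.zero_mem)
    (fun {a b} ha hb => by
      show ((a + b : R) : S) ∈ (P : Set S); push_cast; exact P.add_mem ha hb)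
    (fun {a} ha => by
      show ((-a : R) : S) ∈ (P : Set S); push_cast; exact P.neg_mem ha)
    (fun {a b} hb => by
      show ((a * b : R) : S) ∈ (P : Set S); push_cast; exact P.mul_mem_left _ _ hb)
    (fun {a b} ha => by
      show ((a * b : R) : S) ∈ (P : Set S); push_cast; exact P.mul_mem_right _ _ ha)
  have hmemK : ∀ x : R, x ∈ K ↔ (x : S) ∈ P := fun x => TwoSidedIdeal.mem_mk' _ _ _ _ _ _ x
  -- Step 1: `I ⊆ primeRad K`.
  have hIrad : ∀ i ∈ (I : Set R), i ∈ primeRad (K : Set R) := by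
    intro i hi Q hQ hKQ
    have hQJ : Q ∈ zarV (restrSet R (J : Set S)) := by
      refine ⟨hQ, fun x hxm => hKQ ?_⟩
      show x ∈ K
      exact (hmemK x).mpr (hJP hxm)
    exact (h hQJ).2 hi
  -- Step 2: nilpotence — `n`-fold products of elements of `I` lie in `K`.
  obtain ⟨n, hn0, hnil⟩ := hRN K
  have hprodK : ∀ l : List R, l.length = n → (∀ x ∈ l, x ∈ (I : Set R)) → l.prod ∈ K := by
    intro l hl hm
    have h2 : ∀ y ∈ l.map K.ringCon.mk', y ∈ primeRad (∅ : Set K.ringCon.Quotient) := by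
      intro y hy
      obtain ⟨a, ha, rfl⟩ := List.mem_map.mp hy
      exact aux_rad_quot K (hIrad a (hm a ha))
    have h3 := hnil (l.map K.ringCon.mk') (by simpa using hl) h2
    rw [← map_list_prod] at h3
    have h0 : K.ringCon.mk' l.prod = K.ringCon.mk' 0 := by rw [h3, map_zero]
    exact (K.mem_iff _).mpr ((RingCon.eq _).mp h0)
  -- `Tk k`: products in `S` of `k` elements of `I`.
  let Tk : ℕ → Set S := fun k =>
    {w | ∃ l : List R, l.length = k ∧ (∀ x ∈ l, x ∈ (I : Set R)) ∧ w = ((l.prod : R) : S)}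
  have hT1 : (Subtype.val '' (I : Set R)) = Tk 1 := by
    ext w
    constructor
    · rintro ⟨x, hx, rfl⟩
      exact ⟨[x], rfl, by simpa using hx, by simp⟩
    · rintro ⟨l, hl, hm, rfl⟩
      obtain ⟨a, rfl⟩ := List.length_eq_one_iff.mp hl
      exact ⟨a, hm a (by simp), by simp⟩
  -- Step 3: multiplication by elements of `extSub` raises the level of the span.
  have stepA : ∀ k : ℕ, ∀ z, z ∈ Ideal.span (Tk k) →
      ∀ e ∈ extSub R (I : Set R), e * z ∈ Ideal.span (Tk (k + 1)) := by
    intro k z hz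
    induction hz using Submodule.span_induction with
    | mem w hw =>
      intro e he
      obtain ⟨l, hl, hm, rfl⟩ := hw
      have he1 : e ∈ Ideal.span (Tk 1) := by
        rw [← hT1]
        simpa using he 1
      clear he
      induction he1 using Submodule.span_induction with
      | mem y hy =>
        obtain ⟨l', hl', hm', rfl⟩ := hy
        refine Ideal.subset_span ⟨l' ++ l, by rw [List.length_append, hl, hl']; omega, ?_, ?_⟩
        · intro x hx
          rcases List.mem_append.mp hx with hx | hx
          exacts [hm' x hx, hm x hx]
        · rw [List.prod_append]; push_cast; ring
      | zero => rw [zero_mul]; exact Ideal.zero_mem _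
      | add y y' hy hy' ihy ihy' => rw [add_mul]; exact Ideal.add_mem _ ihy ihy'
      | smul s y hy ihy =>
        rw [smul_eq_mul, mul_assoc, ← smul_eq_mul]
        exact Submodule.smul_mem _ s ihy
    | zero => intro e _; rw [mul_zero]; exact Ideal.zero_mem _
    | add z z' hz hz' ihz ihz' =>
      intro e he
      rw [mul_add]
      exact Ideal.add_mem _ (ihz e he) (ihz' e he)
    | smul s z hz ihz =>
      intro e he
      rw [smul_eq_mul, ← mul_assoc]
      exact ihz (e * s) (fun u => by rw [mul_assoc]; exact he (s * u))
  -- Step 4: products of elements of `extSub` lie in the corresponding spans.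
  have hEprod : ∀ l : List S, l ≠ [] → (∀ x ∈ l, x ∈ extSub R (I : Set R)) →
      l.prod ∈ Ideal.span (Tk l.length) := by
    intro l
    induction l with
    | nil => intro hne _; exact absurd rfl hne
    | cons a l ih =>
      intro _ hm
      rcases eq_or_ne l [] with rfl | hne
      · show (a :: ([] : List S)).prod ∈ Ideal.span (Tk 1)
        rw [List.prod_cons, List.prod_nil, mul_one, ← hT1]
        simpa using hm a (by simp) 1
      · have hl := ih hne (fun x hx => hm x (List.mem_cons_of_mem a hx))
        rw [List.prod_cons, List.length_cons]
        exact stepA l.length l.prod hl a (hm a (by simp))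
  -- Step 5: `span (Tk n) ⊆ P`.
  have hTnP : ∀ z ∈ Ideal.span (Tk n), z ∈ P := by
    intro z hz
    induction hz using Submodule.span_induction with
    | mem w hw =>
      obtain ⟨l, hl, hm, rfl⟩ := hw
      exact (hmemK _).mp (hprodK l hl hm)
    | zero => exact P.zero_mem
    | add x y hx hy ihx ihy => exact P.add_mem ihx ihy
    | smul s x hx ihx => rw [smul_eq_mul]; exact P.mul_mem_left s x ihx
  -- `extSub` as a two-sided ideal of `S`.
  let E : TwoSidedIdeal S := TwoSidedIdeal.mk' (extSub R (I : Set R))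
    (fun s => by rw [zero_mul]; exact Ideal.zero_mem _)
    (fun {x y} hx hy s => by rw [add_mul]; exact Ideal.add_mem _ (hx s) (hy s))
    (fun {x} hx s => by rw [neg_mul]; exact Submodule.neg_mem _ (hx s))
    (fun {x y} hy s => by
      rw [mul_assoc]; exact Ideal.mul_mem_left _ x (hy s))
    (fun {x y} hx s => by rw [mul_assoc]; exact hx (y * s))
  have hmemE : ∀ x : S, x ∈ E ↔ x ∈ extSub R (I : Set R) := fun x =>
    TwoSidedIdeal.mem_mk' _ _ _ _ _ _ x
  -- Conclude by primality of `P`.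
  obtain ⟨m, rfl⟩ : ∃ m, n = m + 1 := ⟨n - 1, (Nat.succ_pred_eq_of_pos hn0).symm⟩
  intro x hx
  refine aux_le_of_prods_mem (E := E) hPp m ?_ x ((hmemE x).mpr hx)
  intro l hl hm
  have h1 : l ≠ [] := by intro hemp; rw [hemp] at hl; simp at hl
  have h2 : ∀ y ∈ l, y ∈ extSub R (I : Set R) := fun y hy => (hmemE y).mp (hm y hy)
  have h3 := hEprod l h1 h2
  rw [hl] at h3
  exact hTnP _ h3
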